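/- Suppose H(t,x,q,S,V) = x + qS + c_1(t) + c_2(t)q + c_3(t)V + c_4(t)q² + c_5(t)V² + c_6(t)qV, where c_1,…,c_6 are C¹ and satisfy the six ODEs c_1' + η²c_5 + (c_2−γc_3)²/(4k) = 0, c_2' + μ + (c_2−γc_3)(b+2c_4−γc_6)/(2k) = 0, c_3' − βc_3 + (c_2−γc_3)(c_6−2γc_5)/(2k) = 0, c_4' + (b+2c_4−γc_6)²/(4k) = 0, c_5' − 2βc_5 + (c_6−2γc_5)²/(4k) = 0, c_6' − βc_6 + (c_6−2γc_5)(b+2c_4−γc_6)/(2k) = 0. Then H satisfies ∂_t H + sup_{ν∈ℝ} [−(S+kν)ν ∂_x H + ν ∂_q H + (μ+bν)∂_S H − (βV+γν)∂_V H + ½σ²∂_{SS}H + ½η²∂_{VV}H + ρση∂_{SV}H] = 0, the supremum being attained at ν* = (c_2 − γc_3 + (b + 2c_4 − γc_6)q + (c_6 − 2γc_5)V)/(2k). -/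

import Mathlib

open Real

set_option maxHeartbeats 1600000

theorem single_agent_hjb_verification
    (k b γ β μ σ η ρ T : ℝ) (hk : 0 < k) (hT : 0 < T)
    (c1 c2 c3 c4 c5 c6 : ℝ → ℝ)
    (hode1 : ∀ t ∈ Set.Icc (0 : ℝ) T,
      HasDerivAt c1 (-(η ^ 2 * c5 t + (c2 t - γ * c3 t) ^ 2 / (4 * k))) t)
    (hode2 : ∀ t ∈ Set.Icc (0 : ℝ) T,
      HasDerivAt c2 (-(μ + (c2 t - γ * c3 t) * (b + 2 * c4 t - γ * c6 t) / (2 * k))) t)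
    (hode3 : ∀ t ∈ Set.Icc (0 : ℝ) T,
      HasDerivAt c3 (β * c3 t - (c2 t - γ * c3 t) * (c6 t - 2 * γ * c5 t) / (2 * k)) t)
    (hode4 : ∀ t ∈ Set.Icc (0 : ℝ) T,
      HasDerivAt c4 (-((b + 2 * c4 t - γ * c6 t) ^ 2 / (4 * k))) t)
    (hode5 : ∀ t ∈ Set.Icc (0 : ℝ) T,
      HasDerivAt c5 (2 * β * c5 t - (c6 t - 2 * γ * c5 t) ^ 2 / (4 * k)) t)
    (hode6 : ∀ t ∈ Set.Icc (0 : ℝ) T,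
      HasDerivAt c6 (β * c6 t - (c6 t - 2 * γ * c5 t) * (b + 2 * c4 t - γ * c6 t) / (2 * k)) t) :
    let H : ℝ → ℝ → ℝ → ℝ → ℝ → ℝ := fun t x q S V =>
      x + q * S + c1 t + c2 t * q + c3 t * V + c4 t * q ^ 2 + c5 t * V ^ 2 + c6 t * q * V
    ∀ t ∈ Set.Icc (0 : ℝ) T, ∀ x q S V : ℝ,
      let F : ℝ → ℝ := fun ν =>
        -(S + k * ν) * ν * deriv (fun x' => H t x' q S V) x
          + ν * deriv (fun q' => H t x q' S V) q
          + (μ + b * ν) * deriv (fun S' => H t x q S' V) S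
          - (β * V + γ * ν) * deriv (fun V' => H t x q S V') V
          + (1 / 2) * σ ^ 2 * deriv (fun S' => deriv (fun S'' => H t x q S'' V) S') S
          + (1 / 2) * η ^ 2 * deriv (fun V' => deriv (fun V'' => H t x q S V'') V') V
          + ρ * σ * η * deriv (fun S' => deriv (fun V' => H t x q S' V') V) S
      let νstar : ℝ :=
        (c2 t - γ * c3 t + (b + 2 * c4 t - γ * c6 t) * q + (c6 t - 2 * γ * c5 t) * V) / (2 * k)
      IsGreatest (Set.range F) (F νstar) ∧
        deriv (fun s => H s x q S V) t + F νstar = 0 := by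
  intro H t ht x q S V F νstar
  have hc1 := hode1 t ht
  have hc2 := hode2 t ht
  have hc3 := hode3 t ht
  have hc4 := hode4 t ht
  have hc5 := hode5 t ht
  have hc6 := hode6 t ht
  have hk' : k ≠ 0 := ne_of_gt hk
  -- derivative in x
  have hDx : deriv (fun x' => H t x' q S V) x = 1 := by
    have h : HasDerivAt (fun x' : ℝ => x' + q * S + c1 t + c2 t * q + c3 t * V
        + c4 t * q ^ 2 + c5 t * V ^ 2 + c6 t * q * V) 1 x :=
      (((((((hasDerivAt_id x).add_const (q * S)).add_const (c1 t)).add_const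
        (c2 t * q)).add_const (c3 t * V)).add_const (c4 t * q ^ 2)).add_const
        (c5 t * V ^ 2)).add_const (c6 t * q * V)
    simpa [H] using h.deriv
  -- derivative in q
  have hDq : deriv (fun q' => H t x q' S V) q = S + c2 t + 2 * c4 t * q + c6 t * V := by
    have h : HasDerivAt (fun q' : ℝ => x + q' * S + c1 t + c2 t * q' + c3 t * V
        + c4 t * q' ^ 2 + c5 t * V ^ 2 + c6 t * q' * V)
        (S + c2 t + 2 * c4 t * q + c6 t * V) q := by
      have h0 := (((((((hasDerivAt_const q x).add
        ((hasDerivAt_id q).mul_const S)).add_const (c1 t)).add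
        ((hasDerivAt_id q).const_mul (c2 t))).add_const (c3 t * V)).add
        ((hasDerivAt_pow 2 q).const_mul (c4 t))).add_const (c5 t * V ^ 2)).add
        (((hasDerivAt_id q).const_mul (c6 t)).mul_const V)
      exact h0.congr_deriv (by ring)
    simpa [H] using h.deriv
  -- derivative in S (pointwise)
  have hDS : ∀ S₀ : ℝ, deriv (fun S' => H t x q S' V) S₀ = q := by
    intro S₀
    have h : HasDerivAt (fun S' : ℝ => x + q * S' + c1 t + c2 t * q + c3 t * V
        + c4 t * q ^ 2 + c5 t * V ^ 2 + c6 t * q * V) q S₀ := by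
      have h0 := ((((((hasDerivAt_const S₀ x).add
        ((hasDerivAt_id S₀).const_mul q)).add_const (c1 t)).add_const (c2 t * q)).add_const
        (c3 t * V)).add_const (c4 t * q ^ 2)).add_const (c5 t * V ^ 2)
      have h1 := h0.add_const (c6 t * q * V)
      exact h1.congr_deriv (by ring)
    simpa [H] using h.deriv
  -- derivative in V (pointwise)
  have hDV : ∀ V₀ : ℝ, ∀ S₀ : ℝ, deriv (fun V' => H t x q S₀ V') V₀
      = c3 t + 2 * c5 t * V₀ + c6 t * q := by
    intro V₀ S₀
    have h : HasDerivAt (fun V' : ℝ => x + q * S₀ + c1 t + c2 t * q + c3 t * V'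
        + c4 t * q ^ 2 + c5 t * V' ^ 2 + c6 t * q * V')
        (c3 t + 2 * c5 t * V₀ + c6 t * q) V₀ := by
      have h0 := (((((((hasDerivAt_const V₀ x).add_const (q * S₀)).add_const
        (c1 t)).add_const (c2 t * q)).add
        ((hasDerivAt_id V₀).const_mul (c3 t))).add_const (c4 t * q ^ 2)).add
        ((hasDerivAt_pow 2 V₀).const_mul (c5 t))).add
        ((hasDerivAt_id V₀).const_mul (c6 t * q))
      exact h0.congr_deriv (by ring)
    simpa [H] using h.deriv
  -- second derivative in S
  have hDSS : deriv (fun S' => deriv (fun S'' => H t x q S'' V) S') S = 0 := by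
    have : (fun S' => deriv (fun S'' => H t x q S'' V) S') = fun _ : ℝ => q := by
      funext S'
      exact hDS S'
    rw [this, deriv_const]
  -- second derivative in V
  have hDVV : deriv (fun V' => deriv (fun V'' => H t x q S V'') V') V = 2 * c5 t := by
    have heq : (fun V' => deriv (fun V'' => H t x q S V'') V')
        = fun V' : ℝ => c3 t + 2 * c5 t * V' + c6 t * q := by
      funext V'
      exact hDV V' S
    rw [heq]
    have h : HasDerivAt (fun V' : ℝ => c3 t + 2 * c5 t * V' + c6 t * q) (2 * c5 t) V := by
      have h0 := (((hasDerivAt_const V (c3 t)).add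
        ((hasDerivAt_id V).const_mul (2 * c5 t))).add_const (c6 t * q))
      exact h0.congr_deriv (by ring)
    simpa using h.deriv
  -- mixed derivative
  have hDSV : deriv (fun S' => deriv (fun V' => H t x q S' V') V) S = 0 := by
    have heq : (fun S' => deriv (fun V' => H t x q S' V') V)
        = fun _ : ℝ => c3 t + 2 * c5 t * V + c6 t * q := by
      funext S'
      exact hDV V S'
    rw [heq, deriv_const]
  -- time derivative
  have hDt : deriv (fun s => H s x q S V) t =
      -(η ^ 2 * c5 t + (c2 t - γ * c3 t) ^ 2 / (4 * k))
      + (-(μ + (c2 t - γ * c3 t) * (b + 2 * c4 t - γ * c6 t) / (2 * k))) * q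
      + (β * c3 t - (c2 t - γ * c3 t) * (c6 t - 2 * γ * c5 t) / (2 * k)) * V
      + (-((b + 2 * c4 t - γ * c6 t) ^ 2 / (4 * k))) * q ^ 2
      + (2 * β * c5 t - (c6 t - 2 * γ * c5 t) ^ 2 / (4 * k)) * V ^ 2
      + (β * c6 t - (c6 t - 2 * γ * c5 t) * (b + 2 * c4 t - γ * c6 t) / (2 * k)) * q * V := by
    have h : HasDerivAt (fun s : ℝ => x + q * S + c1 s + c2 s * q + c3 s * V
        + c4 s * q ^ 2 + c5 s * V ^ 2 + c6 s * q * V)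
        (-(η ^ 2 * c5 t + (c2 t - γ * c3 t) ^ 2 / (4 * k))
        + (-(μ + (c2 t - γ * c3 t) * (b + 2 * c4 t - γ * c6 t) / (2 * k))) * q
        + (β * c3 t - (c2 t - γ * c3 t) * (c6 t - 2 * γ * c5 t) / (2 * k)) * V
        + (-((b + 2 * c4 t - γ * c6 t) ^ 2 / (4 * k))) * q ^ 2
        + (2 * β * c5 t - (c6 t - 2 * γ * c5 t) ^ 2 / (4 * k)) * V ^ 2
        + (β * c6 t - (c6 t - 2 * γ * c5 t) * (b + 2 * c4 t - γ * c6 t) / (2 * k)) * q * V) t := by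
      have h0 := ((((((hasDerivAt_const t x).add (hasDerivAt_const t (q * S))).add
        hc1).add (hc2.mul_const q)).add (hc3.mul_const V)).add
        (hc4.mul_const (q ^ 2))).add (hc5.mul_const (V ^ 2))
      have h1 := h0.add ((hc6.mul_const q).mul_const V)
      exact h1.congr_deriv (by ring)
    simpa [H] using h.deriv
  have hF : ∀ ν : ℝ, F ν = -(S + k * ν) * ν * 1
      + ν * (S + c2 t + 2 * c4 t * q + c6 t * V)
      + (μ + b * ν) * q
      - (β * V + γ * ν) * (c3 t + 2 * c5 t * V + c6 t * q)
      + (1 / 2) * σ ^ 2 * 0 + (1 / 2) * η ^ 2 * (2 * c5 t) + ρ * σ * η * 0 := by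
    intro ν
    simp only [F, hDx, hDq, hDS S, hDV V S, hDSS, hDVV, hDSV]
  constructor
  · constructor
    · exact ⟨νstar, rfl⟩
    · rintro y ⟨ν, rfl⟩
      rw [hF ν, hF νstar]
      have key : (-(S + k * νstar) * νstar * 1
          + νstar * (S + c2 t + 2 * c4 t * q + c6 t * V)
          + (μ + b * νstar) * q
          - (β * V + γ * νstar) * (c3 t + 2 * c5 t * V + c6 t * q)
          + (1 / 2) * σ ^ 2 * 0 + (1 / 2) * η ^ 2 * (2 * c5 t) + ρ * σ * η * 0)
          - (-(S + k * ν) * ν * 1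
          + ν * (S + c2 t + 2 * c4 t * q + c6 t * V)
          + (μ + b * ν) * q
          - (β * V + γ * ν) * (c3 t + 2 * c5 t * V + c6 t * q)
          + (1 / 2) * σ ^ 2 * 0 + (1 / 2) * η ^ 2 * (2 * c5 t) + ρ * σ * η * 0)
          = k * (ν - νstar) ^ 2 := by
        simp only [νstar]
        field_simp
        ring
      linarith [key, mul_nonneg (le_of_lt hk) (sq_nonneg (ν - νstar))]
  · rw [hDt, hF νstar]
    simp only [νstar]
    field_simp
    ring
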